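/- arXiv:1503.06591 — 2 statements merged into one kernel-verified Lean document; each statement's English description precedes it below -/
import Mathlib

section
/- With a_n = Σ_{k=0}^n C(n,k)^2 C(2k,k), H(x) = Σ a_n x^n ∈ 𝔽_p[[x]] and H_p its truncation at degree p-1, one has H(x)^{1-p} = H_p(x) in 𝔽_p[[x]] (equivalently H(x) = H_p(x)·H(x)^p), for every prime p. -/
open PowerSeries Finset

/-- The coefficients `a n = Σ_{k=0}^n C(n,k)² C(2k,k)`. -/
def aSeq (n : ℕ) : ℕ :=
  ∑ k ∈ Finset.range (n + 1), (Nat.choose n k) ^ 2 * Nat.choose (2 * k) k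

/-- The generating series `H` reduced mod `p`. -/
noncomputable def Hmod (p : ℕ) : PowerSeries (ZMod p) :=
  PowerSeries.mk fun n => (aSeq n : ZMod p)

/-- The truncation `H_p(x) = Σ_{n=0}^{p-1} a_n x^n` mod `p`, as a power series. -/
noncomputable def HtruncSeries (p : ℕ) : PowerSeries (ZMod p) :=
  ∑ n ∈ Finset.range p, PowerSeries.C (R := ZMod p) (aSeq n : ZMod p) * PowerSeries.X ^ n

section Aux

variable (p : ℕ) [Fact p.Prime]

instance : CharP (PowerSeries (ZMod p)) p :=
  charP_of_injective_ringHom (f := C (R := ZMod p))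
    (fun a b h => by simpa using congrArg (constantCoeff (R := ZMod p)) h) p

/-- Coefficients of a `p`-th power of a power series over `ZMod p`. -/
lemma coeff_pow_p (f : PowerSeries (ZMod p)) (N : ℕ) :
    coeff N (f ^ p) = if p ∣ N then coeff (N / p) f else 0 := by
  have hp : p.Prime := Fact.out
  set g : Polynomial (ZMod p) := trunc (N + 1) f with hg
  have hdvd : (X : (ZMod p)⟦X⟧) ^ (N + 1) ∣ (f - (g : (ZMod p)⟦X⟧)) := by
    rw [PowerSeries.X_pow_dvd_iff]
    intro m hm
    simp [hg, Polynomial.coeff_coe, coeff_trunc, hm]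
  have h1 : (g : (ZMod p)⟦X⟧) + (f - g) = f := by ring
  have key : f ^ p = (g : (ZMod p)⟦X⟧) ^ p + (f - g) ^ p := by
    rw [← add_pow_char, h1]
  have h0 : coeff N ((f - (g : (ZMod p)⟦X⟧)) ^ p) = 0 := by
    have : (X : (ZMod p)⟦X⟧) ^ ((N + 1) * p) ∣ (f - g) ^ p := by
      rw [pow_mul]; exact pow_dvd_pow_of_dvd hdvd p
    exact (PowerSeries.X_pow_dvd_iff.mp this) N (by nlinarith [hp.two_le])
  have hgp : g ^ p = Polynomial.expand (ZMod p) p g := by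
    exact (ZMod.expand_card g).symm
  rw [key, map_add, h0, add_zero, ← Polynomial.coe_pow, Polynomial.coeff_coe, hgp,
    Polynomial.coeff_expand hp.pos]
  split_ifs with h
  · rw [hg, coeff_trunc, if_pos (Nat.lt_succ_of_le (Nat.div_le_self _ _))]
  · rfl

/-- Lucas' theorem, cast into `ZMod p`. -/
lemma lucas_cast (n k : ℕ) :
    ((n.choose k : ZMod p)) =
      ((n % p).choose (k % p) : ZMod p) * ((n / p).choose (k / p) : ZMod p) := by
  have := Choose.choose_modEq_choose_mod_mul_choose_div_nat (n := n) (k := k) (p := p)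
  have h := (ZMod.natCast_eq_natCast_iff _ _ _).mpr this
  push_cast at h
  exact h

lemma central_zero (i : ℕ) (h1 : p ≤ 2 * i) (h2 : i < p) :
    ((2 * i).choose i : ZMod p) = 0 := by
  rw [lucas_cast p]
  have hip : i % p = i := Nat.mod_eq_of_lt h2
  have hm : (2 * i) % p = 2 * i - p := by
    rw [Nat.mod_eq_sub_mod h1, Nat.mod_eq_of_lt (by omega)]
  rw [hip, hm, Nat.choose_eq_zero_of_lt (by omega : 2 * i - p < i)]
  simp

lemma central_split (k : ℕ) :
    (((2 * k).choose k : ZMod p)) =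
      ((2 * (k % p)).choose (k % p) : ZMod p) * ((2 * (k / p)).choose (k / p) : ZMod p) := by
  have hp : p.Prime := Fact.out
  rw [lucas_cast p]
  set a := k % p with ha
  set b := k / p with hb
  have hi : a < p := Nat.mod_lt _ hp.pos
  have hk : p * b + a = k := Nat.div_add_mod k p
  have hkz : (p : ℤ) * (b : ℤ) + (a : ℤ) = (k : ℤ) := by exact_mod_cast hk
  by_cases h2i : 2 * a < p
  · have h2k : 2 * k = 2 * a + 2 * b * p := by
      zify; linear_combination -2 * hkz
    have hm : (2 * k) % p = 2 * a := by
      rw [h2k, Nat.add_mul_mod_self_right, Nat.mod_eq_of_lt h2i]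
    have hd : (2 * k) / p = 2 * b := by
      rw [h2k, Nat.add_mul_div_right _ _ hp.pos, Nat.div_eq_of_lt h2i, zero_add]
    rw [hm, hd]
  · have hle : p ≤ 2 * a := le_of_not_gt h2i
    have h2k : 2 * k = (2 * a - p) + (2 * b + 1) * p := by
      zify [hle]; linear_combination -2 * hkz
    have hm : (2 * k) % p = 2 * a - p := by
      rw [h2k, Nat.add_mul_mod_self_right, Nat.mod_eq_of_lt (by omega)]
    have hd : (2 * k) / p = 2 * b + 1 := by
      rw [h2k, Nat.add_mul_div_right _ _ hp.pos, Nat.div_eq_of_lt (by omega), zero_add]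
    rw [hm, hd, Nat.choose_eq_zero_of_lt (by omega : 2 * a - p < a),
      central_zero p _ (by omega) hi]
    simp

lemma aSeq_cast (n : ℕ) : ((aSeq n : ZMod p)) =
    ∑ k ∈ range (n + 1), ((n.choose k : ZMod p)) ^ 2 * (((2 * k).choose k : ZMod p)) := by
  simp [aSeq]

/-- The Lucas property of the sequence `aSeq`. -/
lemma aSeq_lucas (q r : ℕ) (hr : r < p) :
    ((aSeq (q * p + r) : ZMod p)) = (aSeq q : ZMod p) * (aSeq r : ZMod p) := by
  have hp : p.Prime := Fact.out
  have hmod : (q * p + r) % p = r := by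
    rw [add_comm, Nat.add_mul_mod_self_right, Nat.mod_eq_of_lt hr]
  have hdiv : (q * p + r) / p = q := by
    rw [add_comm, Nat.add_mul_div_right _ _ hp.pos, Nat.div_eq_of_lt hr, zero_add]
  set T : ℕ → ZMod p := fun k =>
    ((r.choose (k % p) : ZMod p)) ^ 2 * (((2 * (k % p)).choose (k % p) : ZMod p)) *
      (((q.choose (k / p) : ZMod p)) ^ 2 * (((2 * (k / p)).choose (k / p) : ZMod p))) with hT
  have step1 : ((aSeq (q * p + r) : ZMod p)) = ∑ k ∈ range (q * p + r + 1), T k := by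
    rw [aSeq_cast]
    refine Finset.sum_congr rfl fun k _ => ?_
    rw [lucas_cast p (q * p + r) k, central_split p k, hmod, hdiv, hT]
    ring
  have step2 : ∑ k ∈ range (q * p + r + 1), T k = ∑ k ∈ range (p * (q + 1)), T k := by
    refine Finset.sum_subset (Finset.range_subset_range.mpr (by nlinarith)) ?_
    intro k hk hk'
    simp only [Finset.mem_range, not_lt] at hk hk'
    have e : p * q = q * p := mul_comm _ _
    have e2 : p * (q + 1) = q * p + p := by ring
    have hdq : k / p = q := Nat.div_eq_of_lt_le (by omega) (by rw [add_mul]; omega)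
    have hmq : r < k % p := by
      have h := Nat.div_add_mod k p
      rw [hdq] at h
      omega
    rw [hT]
    simp [Nat.choose_eq_zero_of_lt hmq]
  have step3 : ∑ k ∈ range (p * (q + 1)), T k =
      ∑ x ∈ range p ×ˢ range (q + 1),
        ((r.choose x.1 : ZMod p)) ^ 2 * (((2 * x.1).choose x.1 : ZMod p)) *
          (((q.choose x.2 : ZMod p)) ^ 2 * (((2 * x.2).choose x.2 : ZMod p))) := by
    refine Finset.sum_nbij' (fun k => (k % p, k / p)) (fun x => x.1 + p * x.2) ?_ ?_ ?_ ?_ ?_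
    · intro k hk
      simp only [Finset.mem_range] at hk
      simp only [Finset.mem_product, Finset.mem_range]
      exact ⟨Nat.mod_lt _ hp.pos, by rwa [Nat.div_lt_iff_lt_mul hp.pos, mul_comm]⟩
    · intro x hx
      simp only [Finset.mem_product, Finset.mem_range] at hx
      simp only [Finset.mem_range]
      calc x.1 + p * x.2 < p + p * x.2 := by omega
        _ ≤ p * (q + 1) := by nlinarith [hx.2]
    · intro k hk
      exact Nat.mod_add_div k p
    · intro x hx
      simp only [Finset.mem_product, Finset.mem_range] at hx
      have h1 : (x.1 + p * x.2) % p = x.1 := by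
        rw [Nat.add_mul_mod_self_left, Nat.mod_eq_of_lt hx.1]
      have h2 : (x.1 + p * x.2) / p = x.2 := by
        rw [Nat.add_mul_div_left _ _ hp.pos, Nat.div_eq_of_lt hx.1, zero_add]
      exact Prod.ext h1 h2
    · intro k hk; rfl
  have step4 : (aSeq r : ZMod p) =
      ∑ i ∈ range p, ((r.choose i : ZMod p)) ^ 2 * (((2 * i).choose i : ZMod p)) := by
    rw [aSeq_cast]
    refine Finset.sum_subset (Finset.range_subset_range.mpr (by omega)) ?_
    intro i _ hi'
    simp only [Finset.mem_range, not_lt] at hi'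
    simp [Nat.choose_eq_zero_of_lt (by omega : r < i)]
  rw [step1, step2, step3, Finset.sum_product, aSeq_cast p q, step4, Finset.sum_mul_sum]
  rw [Finset.sum_comm]
  refine Finset.sum_congr rfl fun j _ => ?_
  refine Finset.sum_congr rfl fun i _ => ?_
  ring

lemma Hmod_eq_mul : Hmod p = HtruncSeries p * (Hmod p) ^ p := by
  have hp : p.Prime := Fact.out
  ext N
  have hterm : ∀ n ∈ range p,
      coeff N (C (aSeq n : ZMod p) * X ^ n * Hmod p ^ p) =
        if n ≤ N ∧ p ∣ (N - n) then (aSeq n : ZMod p) * (aSeq ((N - n) / p) : ZMod p)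
        else 0 := by
    intro n _
    rw [mul_assoc, coeff_C_mul, coeff_X_pow_mul']
    simp only [coeff_pow_p, Hmod, coeff_mk]
    by_cases h1 : n ≤ N <;> by_cases h2 : p ∣ N - n <;> simp [h1, h2]
  have hR : coeff N (HtruncSeries p * Hmod p ^ p) =
      ∑ n ∈ range p, (if n ≤ N ∧ p ∣ (N - n) then
        (aSeq n : ZMod p) * (aSeq ((N - n) / p) : ZMod p) else 0) := by
    rw [HtruncSeries, Finset.sum_mul, map_sum]
    exact Finset.sum_congr rfl hterm
  rw [hR, Finset.sum_eq_single_of_mem (N % p)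
      (Finset.mem_range.mpr (Nat.mod_lt _ hp.pos))]
  · have hc1 : N % p ≤ N := Nat.mod_le _ _
    have hc2 : p ∣ N - N % p := Nat.dvd_sub_mod N
    rw [if_pos ⟨hc1, hc2⟩]
    have hsub : N - N % p = p * (N / p) := by
      have := Nat.div_add_mod N p; omega
    rw [hsub, Nat.mul_div_cancel_left _ hp.pos]
    have hN : N / p * p + N % p = N := Nat.div_add_mod' N p
    rw [Hmod, coeff_mk, ← hN, aSeq_lucas p _ _ (Nat.mod_lt _ hp.pos)]
    rw [hN]
    ring
  · intro n hn hne
    rw [if_neg]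
    rintro ⟨h1, t, ht⟩
    apply hne
    have hN : N = p * t + n := by omega
    have : N % p = n := by
      rw [hN, Nat.mul_add_mod, Nat.mod_eq_of_lt (Finset.mem_range.mp hn)]
    omega

end Aux

/-- In `𝔽_p⟦x⟧` one has `H(x)^{1-p} = H_p(x)`, i.e. `H · (H⁻¹)^p = H_p`,
equivalently `H = H_p · H^p`. -/
theorem H_pow_one_sub_p_eq_Htrunc (p : ℕ) [Fact p.Prime] :
    Hmod p * ((Hmod p)⁻¹) ^ p = HtruncSeries p ∧
      Hmod p = HtruncSeries p * (Hmod p) ^ p := by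
  have h2 := Hmod_eq_mul p
  have hu : Hmod p * (Hmod p)⁻¹ = 1 := by
    apply PowerSeries.mul_inv_cancel
    have : constantCoeff (R := ZMod p) (Hmod p) = (aSeq 0 : ZMod p) := by
      simp [Hmod, coeff_zero_eq_constantCoeff.symm]
    rw [this]
    norm_num [aSeq]
  refine ⟨?_, h2⟩
  have h3 := congrArg (fun f => f * ((Hmod p)⁻¹) ^ p) h2
  rw [h3, mul_assoc, ← mul_pow, hu, one_pow, mul_one]
end

section
/- H(x) = Σ_{n≥0} a_n x^n with a_n = Σ_{k=0}^n C(n,k)^2 C(2k,k) satisfies H(x) = (1/(1-3x)) · F(27x^2(1-x)/(1-3x)^3), where F(z) = Σ_{n≥0} ((3n)!/(n!)^3) (z/27)^n = ₂F₁(1/3,2/3;1;z), as formal power series over ℚ. -/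
open PowerSeries Finset

/-- The generating series `H = Σ a_n x^n ∈ ℚ⟦x⟧`. -/
noncomputable def Hq : PowerSeries ℚ := PowerSeries.mk fun n => (aSeq n : ℚ)

/-- The coefficients of the hypergeometric series `F(z) = ₂F₁(1/3,2/3;1;z)
= Σ ((3n)!/(n!)³)(z/27)^n`. -/
noncomputable def fCoeff (n : ℕ) : ℚ :=
  (Nat.factorial (3 * n) : ℚ) / ((Nat.factorial n : ℚ) ^ 3) / 27 ^ n

/-- Composition `Σ_n c_n u^n` of a coefficient sequence `c` with a power series `u`
having zero constant term: the `n`-th coefficient only involves `u^k` for `k ≤ n`. -/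
noncomputable def seriesComp (c : ℕ → ℚ) (u : PowerSeries ℚ) : PowerSeries ℚ :=
  PowerSeries.mk fun n =>
    PowerSeries.coeff (R := ℚ) n (∑ k ∈ Finset.range (n + 1), PowerSeries.C (R := ℚ) (c k) * u ^ k)

/-- The power series `27x²(1-x)/(1-3x)³ ∈ ℚ⟦x⟧`; it has zero constant term. -/
noncomputable def wSeries : PowerSeries ℚ :=
  27 * PowerSeries.X ^ 2 * (1 - PowerSeries.X) * ((1 - 3 * PowerSeries.X)⁻¹) ^ 3

/-! ### Auxiliary machinery -/

section Comp

lemma coeff_pow_of_lt {u : PowerSeries ℚ} (hu : PowerSeries.constantCoeff (R := ℚ) u = 0)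
    {n k : ℕ} (h : n < k) : PowerSeries.coeff (R := ℚ) n (u ^ k) = 0 := by
  have hdvd : (PowerSeries.X : PowerSeries ℚ) ^ k ∣ u ^ k :=
    pow_dvd_pow_of_dvd (PowerSeries.X_dvd_iff.2 hu) k
  exact PowerSeries.X_pow_dvd_iff.1 hdvd n h

lemma coeff_seriesComp (c : ℕ → ℚ) (u : PowerSeries ℚ) (n : ℕ) :
    PowerSeries.coeff (R := ℚ) n (seriesComp c u)
      = ∑ k ∈ Finset.range (n + 1), c k * PowerSeries.coeff (R := ℚ) n (u ^ k) := by
  simp [seriesComp, PowerSeries.coeff_mk]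

lemma coeff_seriesComp_trunc {u : PowerSeries ℚ} (hu : PowerSeries.constantCoeff (R := ℚ) u = 0)
    (c : ℕ → ℚ) {n m : ℕ} (h : n < m) :
    PowerSeries.coeff (R := ℚ) n (seriesComp c u)
      = PowerSeries.coeff (R := ℚ) n (∑ k ∈ Finset.range m, PowerSeries.C (R := ℚ) (c k) * u ^ k) := by
  rw [coeff_seriesComp]
  rw [map_sum]
  simp only [PowerSeries.coeff_C_mul]
  apply Finset.sum_subset
  · exact Finset.range_subset_range.2 h
  · intro k hk hk'
    have : n < k := by
      simp only [Finset.mem_range, not_lt] at hk'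
      omega
    rw [coeff_pow_of_lt hu this, mul_zero]

lemma coeff_mul_seriesComp_trunc {u : PowerSeries ℚ} (hu : PowerSeries.constantCoeff (R := ℚ) u = 0)
    (c : ℕ → ℚ) (v : PowerSeries ℚ) {n m : ℕ} (h : n < m) :
    PowerSeries.coeff (R := ℚ) n (v * seriesComp c u)
      = PowerSeries.coeff (R := ℚ) n (v * ∑ k ∈ Finset.range m, PowerSeries.C (R := ℚ) (c k) * u ^ k) := by
  rw [PowerSeries.coeff_mul, PowerSeries.coeff_mul]
  apply Finset.sum_congr rfl
  intro p hp
  have hp2 : p.2 < m := by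
    have := Finset.HasAntidiagonal.mem_antidiagonal.1 hp
    omega
  rw [coeff_seriesComp_trunc hu c hp2]

lemma seriesComp_add (b c : ℕ → ℚ) (u : PowerSeries ℚ) :
    seriesComp (fun k => b k + c k) u = seriesComp b u + seriesComp c u := by
  ext n
  rw [map_add, coeff_seriesComp, coeff_seriesComp, coeff_seriesComp, ← Finset.sum_add_distrib]
  exact Finset.sum_congr rfl fun k _ => by ring

lemma seriesComp_sub (b c : ℕ → ℚ) (u : PowerSeries ℚ) :
    seriesComp (fun k => b k - c k) u = seriesComp b u - seriesComp c u := by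
  ext n
  rw [map_sub, coeff_seriesComp, coeff_seriesComp, coeff_seriesComp, ← Finset.sum_sub_distrib]
  exact Finset.sum_congr rfl fun k _ => by ring

lemma seriesComp_smul (a : ℚ) (c : ℕ → ℚ) (u : PowerSeries ℚ) :
    seriesComp (fun k => a * c k) u = PowerSeries.C (R := ℚ) a * seriesComp c u := by
  ext n
  rw [PowerSeries.coeff_C_mul, coeff_seriesComp, coeff_seriesComp, Finset.mul_sum]
  exact Finset.sum_congr rfl fun k _ => by ring

lemma seriesComp_zero_fun (u : PowerSeries ℚ) :
    seriesComp (fun _ => (0:ℚ)) u = 0 := by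
  ext n
  rw [coeff_seriesComp]
  simp

/-- shift of a coefficient sequence -/
def shf (c : ℕ → ℚ) : ℕ → ℚ
  | 0 => 0
  | (k+1) => c k

lemma seriesComp_shf {u : PowerSeries ℚ} (hu : PowerSeries.constantCoeff (R := ℚ) u = 0)
    (c : ℕ → ℚ) : seriesComp (shf c) u = u * seriesComp c u := by
  ext n
  rw [coeff_mul_seriesComp_trunc hu c u (Nat.lt_succ_self n),
      coeff_seriesComp_trunc hu (shf c) (Nat.lt_succ_of_lt (Nat.lt_succ_self n))]
  congr 1
  rw [Finset.mul_sum, Finset.sum_range_succ']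
  simp only [shf]
  rw [map_zero, zero_mul, add_zero]
  exact Finset.sum_congr rfl fun k _ => by ring

lemma seriesComp_deriv {u : PowerSeries ℚ} (hu : PowerSeries.constantCoeff (R := ℚ) u = 0)
    (c : ℕ → ℚ) :
    d⁄dX ℚ (seriesComp c u)
      = seriesComp (fun k => ((k:ℚ) + 1) * c (k+1)) u * d⁄dX ℚ u := by
  ext n
  rw [PowerSeries.coeff_derivative, coeff_seriesComp_trunc hu c (Nat.lt_succ_self (n+1)),
     ← PowerSeries.coeff_derivative]
  rw [mul_comm (seriesComp _ u) (d⁄dX ℚ u),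
      coeff_mul_seriesComp_trunc hu _ (d⁄dX ℚ u) (Nat.lt_succ_self n),
      mul_comm (d⁄dX ℚ u)]
  congr 1
  rw [map_sum, Finset.sum_range_succ']
  have h0 : d⁄dX ℚ (PowerSeries.C (R := ℚ) (c 0) * u ^ 0) = 0 := by
    simp
  rw [h0, add_zero, Finset.sum_mul]
  apply Finset.sum_congr rfl
  intro k _
  rw [Derivation.leibniz, Derivation.leibniz_pow]
  simp only [PowerSeries.derivative_C, smul_eq_mul, Nat.add_sub_cancel]
  ring_nf
  simp only [map_add, map_mul, map_natCast]
  ring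

end Comp

section Wfacts

local notation "E" => (1 - 3 * PowerSeries.X : PowerSeries ℚ)
local notation "W" => wSeries
local notation "DD" => d⁄dX ℚ

lemma constCoeff_E : PowerSeries.constantCoeff (R := ℚ) E = 1 := by
  simp

lemma hE : E * E⁻¹ = 1 :=
  PowerSeries.mul_inv_cancel _ (by rw [constCoeff_E]; norm_num)

lemma hW0 : PowerSeries.constantCoeff (R := ℚ) W = 0 := by
  simp [wSeries]

lemma hW3 : E ^ 3 * W = 27 * PowerSeries.X ^ 2 - 27 * PowerSeries.X ^ 3 := by
  rw [wSeries]
  linear_combination (27 * PowerSeries.X ^ 2 * (1 - PowerSeries.X) *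
    ((E * E⁻¹) ^ 2 + (E * E⁻¹) + 1)) * hE

lemma dOfNat (n : ℕ) [n.AtLeastTwo] :
    DD (no_index (OfNat.ofNat n) : ℚ⟦X⟧) = 0 := by
  rw [show (OfNat.ofNat n : ℚ⟦X⟧) = PowerSeries.C (R := ℚ) (OfNat.ofNat n) from (map_ofNat _ _).symm]
  exact PowerSeries.derivative_C

lemma hW4 : E ^ 4 * DD W = 54 * PowerSeries.X := by
  have h1 := congrArg DD hW3
  simp only [map_sub, Derivation.leibniz, Derivation.leibniz_pow, Derivation.map_one_eq_zero,
    PowerSeries.derivative_X, smul_eq_mul, Nat.add_sub_cancel, dOfNat,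
    mul_zero, zero_mul, sub_zero, zero_sub, mul_one, map_one] at h1
  push_cast at h1
  linear_combination E * h1 + 9 * hW3

lemma hW5 : E ^ 5 * DD (DD W) = 54 + 486 * PowerSeries.X := by
  have h1 := congrArg DD hW4
  simp only [map_sub, Derivation.leibniz, Derivation.leibniz_pow, Derivation.map_one_eq_zero,
    PowerSeries.derivative_X, smul_eq_mul, Nat.add_sub_cancel, dOfNat,
    mul_zero, zero_mul, sub_zero, zero_sub, mul_one, map_one] at h1
  push_cast at h1
  linear_combination E * h1 + 12 * hW4

end Wfacts

section Fcoeff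

noncomputable def c1 (k : ℕ) : ℚ := ((k:ℚ) + 1) * fCoeff (k+1)
noncomputable def c2 (k : ℕ) : ℚ := ((k:ℚ) + 1) * c1 (k+1)

lemma frec (k : ℕ) : 9 * ((k:ℚ)+1)^2 * fCoeff (k+1) = (3*k+1)*(3*k+2) * fCoeff k := by
  have h3 : 3 * (k+1) = (3*k+1) + 1 + 1 := by ring
  rw [fCoeff, fCoeff, h3, Nat.factorial_succ, Nat.factorial_succ, Nat.factorial_succ,
    Nat.factorial_succ, pow_succ]
  have hk : ((Nat.factorial k : ℚ)) ≠ 0 := Nat.cast_ne_zero.2 (Nat.factorial_ne_zero k)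
  have h27 : ((27:ℚ)) ^ k ≠ 0 := pow_ne_zero _ (by norm_num)
  field_simp
  push_cast
  ring

lemma hyp0 (k : ℕ) :
    9 * shf c2 k - 9 * shf (shf c2) k + 9 * c1 k - 18 * shf c1 k - 2 * fCoeff k = 0 := by
  match k with
  | 0 =>
    simp only [shf, c1]
    have hf := frec 0
    push_cast at hf ⊢
    linear_combination hf
  | 1 =>
    simp only [shf, c1, c2]
    have hf := frec 1
    push_cast at hf ⊢
    linear_combination hf
  | (m+2) =>
    simp only [shf, c1, c2]
    rw [show m+1+1 = m+2 from rfl, show m+2+1 = m+3 from rfl]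
    have hf := frec (m+2)
    rw [show m+2+1 = m+3 from rfl] at hf
    push_cast at hf ⊢
    linear_combination hf

end Fcoeff

section Main

local notation "E" => (1 - 3 * PowerSeries.X : PowerSeries ℚ)
local notation "W" => wSeries
local notation "DD" => d⁄dX ℚ
local notation "Xp" => (PowerSeries.X : ℚ⟦X⟧)

noncomputable def Y0 : PowerSeries ℚ := seriesComp fCoeff wSeries
noncomputable def Y1 : PowerSeries ℚ := seriesComp c1 wSeries
noncomputable def Y2 : PowerSeries ℚ := seriesComp c2 wSeries

lemma hREL9 : 9 * (W * Y2) - 9 * (W * (W * Y2)) + 9 * Y1 - 18 * (W * Y1) - 2 * Y0 = 0 := by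
  have h9 : (fun k => 9 * shf c2 k - 9 * shf (shf c2) k + 9 * c1 k - 18 * shf c1 k
      - 2 * fCoeff k) = (fun _ => (0:ℚ)) := funext hyp0
  have e0 : seriesComp (fun k => 9 * shf c2 k - 9 * shf (shf c2) k + 9 * c1 k - 18 * shf c1 k
      - 2 * fCoeff k) wSeries = 0 := by rw [h9, seriesComp_zero_fun]
  rw [seriesComp_sub, seriesComp_sub, seriesComp_add, seriesComp_sub,
    seriesComp_smul, seriesComp_smul, seriesComp_smul, seriesComp_smul, seriesComp_smul,
    seriesComp_shf hW0, seriesComp_shf hW0, seriesComp_shf hW0, seriesComp_shf hW0] at e0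
  simp only [map_ofNat] at e0
  calc (9:ℚ⟦X⟧) * (W * Y2) - 9 * (W * (W * Y2)) + 9 * Y1 - 18 * (W * Y1) - 2 * Y0
      = 9 * (W * seriesComp c2 wSeries) - 9 * (W * (W * seriesComp c2 wSeries))
        + 9 * seriesComp c1 wSeries - 18 * (W * seriesComp c1 wSeries)
        - 2 * seriesComp fCoeff wSeries := by rfl
    _ = 0 := by linear_combination e0

lemma hDY : DD Y0 = Y1 * DD W := seriesComp_deriv hW0 fCoeff
lemma hDY1 : DD Y1 = Y2 * DD W := seriesComp_deriv hW0 c1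

lemma hDDY : DD (DD Y0) = Y2 * (DD W)^2 + Y1 * DD (DD W) := by
  rw [hDY, Derivation.leibniz, hDY1]
  simp only [smul_eq_mul]
  ring


lemma claim8 : E^8 * ((Xp - 16*Xp^2 + 78*Xp^3 - 144*Xp^4 + 81*Xp^5) * (Y2*(DD W)^2 + Y1*(DD (DD W)))
    + (1 - 20*Xp + 78*Xp^2 - 108*Xp^3 + 81*Xp^4) * (Y1 * DD W) + (-24*Xp) * Y0) = 0 := by
  linear_combination
    ((Xp - 16*Xp^2 + 78*Xp^3 - 144*Xp^4 + 81*Xp^5)*Y2*(E^4*DD W + 54*Xp)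
      + (1 - 20*Xp + 78*Xp^2 - 108*Xp^3 + 81*Xp^4)*Y1*E^4) * hW4
    + ((Xp - 16*Xp^2 + 78*Xp^3 - 144*Xp^4 + 81*Xp^5)*Y1*E^3) * hW5
    + (12*Xp*E^8) * hREL9
    + (-108*Xp*E^2*(E^3*Y2 - ((27*Xp^2-27*Xp^3) + E^3*W)*Y2 - 2*E^3*Y1)) * hW3

lemma cancelE8 (A : ℚ⟦X⟧) (h : E^8 * A = 0) : A = 0 := by
  have hIE : E⁻¹ * E = 1 := by rw [mul_comm]; exact hE
  have h2 := congrArg (fun t => (E⁻¹)^8 * t) h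
  simp only [mul_zero] at h2
  rwa [← mul_assoc, ← mul_pow, hIE, one_pow, one_mul] at h2

lemma hODE' : Xp^1*(DD (DD Y0)) - 16*(Xp^2*(DD (DD Y0))) + 78*(Xp^3*(DD (DD Y0)))
    - 144*(Xp^4*(DD (DD Y0))) + 81*(Xp^5*(DD (DD Y0)))
    + DD Y0 - 20*(Xp^1*(DD Y0)) + 78*(Xp^2*(DD Y0)) - 108*(Xp^3*(DD Y0)) + 81*(Xp^4*(DD Y0))
    - 24*(Xp^1*Y0) = 0 := by
  apply cancelE8
  rw [hDDY, hDY]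
  linear_combination claim8

lemma coeff_ofNat_mul (a : ℕ) [a.AtLeastTwo] (f : ℚ⟦X⟧) (m : ℕ) :
    PowerSeries.coeff (R := ℚ) m ((no_index (OfNat.ofNat a) : ℚ⟦X⟧) * f)
      = (OfNat.ofNat a : ℚ) * PowerSeries.coeff (R := ℚ) m f := by
  rw [show (OfNat.ofNat a : ℚ⟦X⟧) = PowerSeries.C (R := ℚ) (OfNat.ofNat a) from (map_ofNat _ _).symm]
  exact PowerSeries.coeff_C_mul _ _ _


lemma z1 : PowerSeries.coeff (R := ℚ) 1 Y0 = 0 := by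
  have e := congrArg (PowerSeries.coeff (R := ℚ) 0) hODE'
  simp only [map_sub, map_add, map_zero, coeff_ofNat_mul, PowerSeries.coeff_X_pow_mul',
    PowerSeries.coeff_derivative] at e
  norm_num at e ⊢
  linarith [e]

lemma z2 : 4 * PowerSeries.coeff (R := ℚ) 2 Y0
    = 20 * PowerSeries.coeff (R := ℚ) 1 Y0 + 24 * PowerSeries.coeff (R := ℚ) 0 Y0 := by
  have e := congrArg (PowerSeries.coeff (R := ℚ) 1) hODE'
  simp only [map_sub, map_add, map_zero, coeff_ofNat_mul, PowerSeries.coeff_X_pow_mul',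
    PowerSeries.coeff_derivative] at e
  norm_num at e ⊢
  linarith [e]

lemma z3 : 9 * PowerSeries.coeff (R := ℚ) 3 Y0
    = 72 * PowerSeries.coeff (R := ℚ) 2 Y0 - 54 * PowerSeries.coeff (R := ℚ) 1 Y0 := by
  have e := congrArg (PowerSeries.coeff (R := ℚ) 2) hODE'
  simp only [map_sub, map_add, map_zero, coeff_ofNat_mul, PowerSeries.coeff_X_pow_mul',
    PowerSeries.coeff_derivative] at e
  norm_num at e ⊢
  linarith [e]

lemma zmain (n : ℕ) : ((n:ℚ)+4)^2 * PowerSeries.coeff (R := ℚ) (n+4) Y0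
    = (16*((n:ℚ)+3)^2+4*((n:ℚ)+3)) * PowerSeries.coeff (R := ℚ) (n+3) Y0
      - (78*((n:ℚ)+2)^2-24) * PowerSeries.coeff (R := ℚ) (n+2) Y0
      + 36*((n:ℚ)+1)*(4*(n:ℚ)+3) * PowerSeries.coeff (R := ℚ) (n+1) Y0
      - 81*(n:ℚ)^2 * PowerSeries.coeff (R := ℚ) n Y0 := by
  rcases n with _ | _ | n
  · have e := congrArg (PowerSeries.coeff (R := ℚ) 3) hODE'
    simp only [map_sub, map_add, map_zero, coeff_ofNat_mul, PowerSeries.coeff_X_pow_mul',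
      PowerSeries.coeff_derivative] at e
    norm_num at e ⊢
    linarith [e]
  · have e := congrArg (PowerSeries.coeff (R := ℚ) 4) hODE'
    simp only [map_sub, map_add, map_zero, coeff_ofNat_mul, PowerSeries.coeff_X_pow_mul',
      PowerSeries.coeff_derivative] at e
    norm_num at e ⊢
    linarith [e]
  · have e := congrArg (PowerSeries.coeff (R := ℚ) (n+5)) hODE'
    simp only [map_sub, map_add, map_zero, coeff_ofNat_mul, PowerSeries.coeff_X_pow_mul',
      PowerSeries.coeff_derivative] at e
    norm_num at e
    simp only [show n+4+1+1 = n+6 by omega, show n+5-2+1+1 = n+5 by omega,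
      show n+5-3+1+1 = n+4 by omega, show n+5-4+1+1 = n+3 by omega,
      show n+5+1 = n+6 by omega, show n+4+1 = n+5 by omega, show n+5-2+1 = n+4 by omega,
      show n+5-3+1 = n+3 by omega, show n+5-4+1 = n+2 by omega,
      show n+5-2 = n+3 by omega, show n+5-3 = n+2 by omega, show n+5-4 = n+1 by omega] at e
    simp only [show n+1+1+4 = n+6 by omega, show n+1+1+3 = n+5 by omega,
      show n+1+1+2 = n+4 by omega, show n+1+1+1 = n+3 by omega,
      show n+1+1 = n+2 by omega]
    push_cast at e ⊢
    linear_combination e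

noncomputable def Tq (n k : ℕ) : ℚ := ((n.choose k : ℚ))^2 * (((2*k).choose k : ℚ))
noncomputable def gq (n k : ℕ) : ℚ :=
  -(k:ℚ)^3 * (4*(n:ℚ)+4-3*(k:ℚ)) * (((n+1).choose k : ℚ))^2 * (((2*k).choose k : ℚ))

lemma key (m k : ℕ) : ((m:ℚ)+2)^4 * Tq (m+2) k
    - ((m:ℚ)+2)^2*(10*((m:ℚ)+1)^2+10*((m:ℚ)+1)+3) * Tq (m+1) k
    + 9*((m:ℚ)+1)^2*((m:ℚ)+2)^2 * Tq m k
    = gq (m+1) (k+1) - gq (m+1) k := by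
  by_cases h1 : k ≤ m
  · -- interior case
    obtain ⟨j, rfl⟩ : ∃ j, m = k + j := ⟨m - k, by omega⟩
    simp only [Tq, gq]
    rw [show k+j+1+1 = k+j+2 by omega]
    rw [Nat.cast_choose ℚ (show k ≤ k+j+2 by omega),
        Nat.cast_choose ℚ (show k ≤ k+j+1 by omega),
        Nat.cast_choose ℚ (show k ≤ k+j by omega),
        Nat.cast_choose ℚ (show k+1 ≤ k+j+2 by omega),
        Nat.cast_choose ℚ (show k ≤ 2*k by omega),
        show 2*(k+1) = 2*k+2 by ring,
        Nat.cast_choose ℚ (show k+1 ≤ 2*k+2 by omega)]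
    rw [show k+j+2-k = j+2 by omega, show k+j+1-k = j+1 by omega, show k+j-k = j by omega,
        show k+j+2-(k+1) = j+1 by omega, show 2*k-k = k by omega, show 2*k+2-(k+1) = k+1 by omega]
    rw [show k+j+2 = (k+j+1)+1 by omega, Nat.factorial_succ (k+j+1),
        show k+j+1 = (k+j)+1 by omega, Nat.factorial_succ (k+j),
        show j+2 = (j+1)+1 by omega, Nat.factorial_succ (j+1), Nat.factorial_succ j,
        Nat.factorial_succ k,
        show 2*k+2 = (2*k+1)+1 by omega, Nat.factorial_succ (2*k+1), Nat.factorial_succ (2*k)]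
    have hkj : ((k+j).factorial : ℚ) ≠ 0 := Nat.cast_ne_zero.2 (Nat.factorial_ne_zero _)
    have hj : (j.factorial : ℚ) ≠ 0 := Nat.cast_ne_zero.2 (Nat.factorial_ne_zero _)
    have hk : (k.factorial : ℚ) ≠ 0 := Nat.cast_ne_zero.2 (Nat.factorial_ne_zero _)
    have h2k : ((2*k).factorial : ℚ) ≠ 0 := Nat.cast_ne_zero.2 (Nat.factorial_ne_zero _)
    have e1 : ((k:ℚ)+(j:ℚ)+2) ≠ 0 := by positivity
    have e2 : ((k:ℚ)+(j:ℚ)+1) ≠ 0 := by positivity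
    have e3 : ((j:ℚ)+2) ≠ 0 := by positivity
    have e4 : ((j:ℚ)+1) ≠ 0 := by positivity
    have e5 : ((k:ℚ)+1) ≠ 0 := by positivity
    have e6 : (2*(k:ℚ)+2) ≠ 0 := by positivity
    have e7 : (2*(k:ℚ)+1) ≠ 0 := by positivity
    push_cast
    field_simp
    ring
  · by_cases h2 : k = m+1
    · subst h2
      simp only [Tq, gq]
      rw [show m+1+1 = m+2 by omega]
      rw [show (m+2).choose (m+1) = m+2 by
            rw [show m+2 = m+1+1 by omega]; exact Nat.choose_succ_self_right (m+1),
          Nat.choose_self, Nat.choose_self,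
          Nat.choose_eq_zero_of_lt (show m < m+1 by omega)]
      have hc := Nat.succ_mul_centralBinom_succ (m+1)
      have hc1 : (2*(m+1)).choose (m+1) = Nat.centralBinom (m+1) := rfl
      have hc2 : (2*(m+1+1)).choose (m+1+1) = Nat.centralBinom (m+2) := rfl
      rw [show m+1+1 = m+2 by omega] at hc2
      rw [hc1, hc2]
      have hcq : ((m:ℚ)+2) * (Nat.centralBinom (m+2) : ℚ)
          = 2*(2*((m:ℚ)+1)+1) * (Nat.centralBinom (m+1) : ℚ) := by
        exact_mod_cast congrArg (Nat.cast (R := ℚ)) hc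
      push_cast
      linear_combination ((m:ℚ)+2)^3 * hcq
    · by_cases h3 : k = m+2
      · subst h3
        simp only [Tq, gq]
        rw [show m+1+1 = m+2 by omega]
        rw [Nat.choose_self,
            Nat.choose_eq_zero_of_lt (show m+1 < m+2 by omega),
            Nat.choose_eq_zero_of_lt (show m < m+2 by omega),
            Nat.choose_eq_zero_of_lt (show m+2 < m+2+1 by omega)]
        push_cast
        ring
      · -- k ≥ m+3
        simp only [Tq, gq]
        rw [show m+1+1 = m+2 by omega]
        rw [Nat.choose_eq_zero_of_lt (show m+2 < k by omega),
            Nat.choose_eq_zero_of_lt (show m+1 < k by omega),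
            Nat.choose_eq_zero_of_lt (show m < k by omega),
            Nat.choose_eq_zero_of_lt (show m+2 < k+1 by omega)]
        push_cast
        ring

lemma aSeq_cast_s10 (n : ℕ) : (aSeq n : ℚ) = ∑ k ∈ Finset.range (n+1), Tq n k := by
  rw [aSeq]
  push_cast
  exact Finset.sum_congr rfl fun k _ => by rw [Tq]

lemma gq_zero_right (m : ℕ) : gq (m+1) 0 = 0 := by
  simp [gq]

lemma gq_top (m : ℕ) : gq (m+1) (m+3) = 0 := by
  rw [gq, show m+1+1 = m+2 by omega, Nat.choose_eq_zero_of_lt (show m+2 < m+3 by omega)]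
  push_cast
  ring

lemma haRec (m : ℕ) : ((m:ℚ)+2)^2 * (aSeq (m+2) : ℚ)
    = (10*((m:ℚ)+1)^2+10*((m:ℚ)+1)+3) * (aSeq (m+1) : ℚ) - 9*((m:ℚ)+1)^2 * (aSeq m : ℚ) := by
  have h1 : ∑ k ∈ Finset.range (m+3),
      (((m:ℚ)+2)^4 * Tq (m+2) k
        - ((m:ℚ)+2)^2*(10*((m:ℚ)+1)^2+10*((m:ℚ)+1)+3) * Tq (m+1) k
        + 9*((m:ℚ)+1)^2*((m:ℚ)+2)^2 * Tq m k)
      = ∑ k ∈ Finset.range (m+3), (gq (m+1) (k+1) - gq (m+1) k) :=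
    Finset.sum_congr rfl fun k _ => key m k
  rw [Finset.sum_range_sub (gq (m+1)), gq_zero_right, gq_top, sub_zero] at h1
  have hS2 : ∑ k ∈ Finset.range (m+3), Tq (m+2) k = (aSeq (m+2) : ℚ) := (aSeq_cast_s10 (m+2)).symm
  have hS1 : ∑ k ∈ Finset.range (m+3), Tq (m+1) k = (aSeq (m+1) : ℚ) := by
    rw [Finset.sum_range_succ, aSeq_cast_s10 (m+1)]
    rw [Tq, Nat.choose_eq_zero_of_lt (show m+1 < m+2 by omega)]
    push_cast
    ring
  have hS0 : ∑ k ∈ Finset.range (m+3), Tq m k = (aSeq m : ℚ) := by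
    rw [Finset.sum_range_succ, Finset.sum_range_succ, aSeq_cast_s10 m]
    rw [Tq, Tq, Nat.choose_eq_zero_of_lt (show m < m+1 by omega),
      Nat.choose_eq_zero_of_lt (show m < m+2 by omega)]
    push_cast
    ring
  rw [Finset.sum_add_distrib, Finset.sum_sub_distrib, ← Finset.mul_sum, ← Finset.mul_sum,
    ← Finset.mul_sum, hS2, hS1, hS0] at h1
  have hne : ((m:ℚ)+2)^2 ≠ 0 := by positivity
  apply mul_left_cancel₀ hne
  linear_combination h1

lemma coeffEH0 : PowerSeries.coeff (R := ℚ) 0 (E * Hq) = 1 := by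
  rw [show E * Hq = Hq - 3*(PowerSeries.X*Hq) by ring]
  rw [map_sub, coeff_ofNat_mul]
  simp [Hq, PowerSeries.coeff_mk, aSeq]

lemma coeffEH (n : ℕ) : PowerSeries.coeff (R := ℚ) (n+1) (E * Hq)
    = (aSeq (n+1) : ℚ) - 3 * (aSeq n : ℚ) := by
  rw [show E * Hq = Hq - 3*(PowerSeries.X*Hq) by ring]
  rw [map_sub, coeff_ofNat_mul, PowerSeries.coeff_succ_X_mul]
  simp [Hq, PowerSeries.coeff_mk]

lemma aval0 : aSeq 0 = 1 := by decide
lemma aval1 : aSeq 1 = 3 := by decide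
lemma aval2 : aSeq 2 = 15 := by decide
lemma aval3 : aSeq 3 = 93 := by decide
lemma aval4 : aSeq 4 = 639 := by decide

lemma y1 : PowerSeries.coeff (R := ℚ) 1 (E * Hq) = 0 := by
  have e1 : PowerSeries.coeff (R := ℚ) 1 (E * Hq) = (aSeq 1 : ℚ) - 3 * (aSeq 0 : ℚ) := coeffEH 0
  rw [e1, aval0, aval1]
  norm_num

lemma y2rel : 4 * PowerSeries.coeff (R := ℚ) 2 (E * Hq)
    = 20 * PowerSeries.coeff (R := ℚ) 1 (E * Hq) + 24 * PowerSeries.coeff (R := ℚ) 0 (E * Hq) := by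
  have e1 : PowerSeries.coeff (R := ℚ) 1 (E * Hq) = (aSeq 1 : ℚ) - 3 * (aSeq 0 : ℚ) := coeffEH 0
  have e2 : PowerSeries.coeff (R := ℚ) 2 (E * Hq) = (aSeq 2 : ℚ) - 3 * (aSeq 1 : ℚ) := coeffEH 1
  rw [e1, e2, coeffEH0, aval0, aval1, aval2]
  norm_num

lemma y3rel : 9 * PowerSeries.coeff (R := ℚ) 3 (E * Hq)
    = 72 * PowerSeries.coeff (R := ℚ) 2 (E * Hq) - 54 * PowerSeries.coeff (R := ℚ) 1 (E * Hq) := by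
  have e1 : PowerSeries.coeff (R := ℚ) 1 (E * Hq) = (aSeq 1 : ℚ) - 3 * (aSeq 0 : ℚ) := coeffEH 0
  have e2 : PowerSeries.coeff (R := ℚ) 2 (E * Hq) = (aSeq 2 : ℚ) - 3 * (aSeq 1 : ℚ) := coeffEH 1
  have e3 : PowerSeries.coeff (R := ℚ) 3 (E * Hq) = (aSeq 3 : ℚ) - 3 * (aSeq 2 : ℚ) := coeffEH 2
  rw [e1, e2, e3, aval0, aval1, aval2, aval3]
  norm_num

lemma ymain (n : ℕ) : ((n:ℚ)+4)^2 * PowerSeries.coeff (R := ℚ) (n+4) (E * Hq)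
    = (16*((n:ℚ)+3)^2+4*((n:ℚ)+3)) * PowerSeries.coeff (R := ℚ) (n+3) (E * Hq)
      - (78*((n:ℚ)+2)^2-24) * PowerSeries.coeff (R := ℚ) (n+2) (E * Hq)
      + 36*((n:ℚ)+1)*(4*(n:ℚ)+3) * PowerSeries.coeff (R := ℚ) (n+1) (E * Hq)
      - 81*(n:ℚ)^2 * PowerSeries.coeff (R := ℚ) n (E * Hq) := by
  rcases n with _ | p
  · have e1 : PowerSeries.coeff (R := ℚ) 1 (E * Hq) = (aSeq 1 : ℚ) - 3 * (aSeq 0 : ℚ) := coeffEH 0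
    have e2 : PowerSeries.coeff (R := ℚ) 2 (E * Hq) = (aSeq 2 : ℚ) - 3 * (aSeq 1 : ℚ) := coeffEH 1
    have e3 : PowerSeries.coeff (R := ℚ) 3 (E * Hq) = (aSeq 3 : ℚ) - 3 * (aSeq 2 : ℚ) := coeffEH 2
    have e4 : PowerSeries.coeff (R := ℚ) (0+4) (E * Hq) = (aSeq 4 : ℚ) - 3 * (aSeq 3 : ℚ) := coeffEH 3
    rw [e1, e2, e3, e4, coeffEH0, aval0, aval1, aval2, aval3, aval4]
    norm_num
  · have e1 : PowerSeries.coeff (R := ℚ) (p+1) (E * Hq) = (aSeq (p+1) : ℚ) - 3 * (aSeq p : ℚ) :=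
      coeffEH p
    have e2 : PowerSeries.coeff (R := ℚ) (p+1+1) (E * Hq) = (aSeq (p+2) : ℚ) - 3 * (aSeq (p+1) : ℚ) :=
      coeffEH (p+1)
    have e3 : PowerSeries.coeff (R := ℚ) (p+1+2) (E * Hq) = (aSeq (p+3) : ℚ) - 3 * (aSeq (p+2) : ℚ) :=
      coeffEH (p+2)
    have e4 : PowerSeries.coeff (R := ℚ) (p+1+3) (E * Hq) = (aSeq (p+4) : ℚ) - 3 * (aSeq (p+3) : ℚ) :=
      coeffEH (p+3)
    have e5 : PowerSeries.coeff (R := ℚ) (p+1+4) (E * Hq) = (aSeq (p+5) : ℚ) - 3 * (aSeq (p+4) : ℚ) :=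
      coeffEH (p+4)
    rw [e1, e2, e3, e4, e5]
    have h3 := haRec (p+3)
    have h2 := haRec (p+2)
    have h1 := haRec (p+1)
    have h0 := haRec p
    rw [show p+3+2 = p+5 from rfl, show p+3+1 = p+4 from rfl] at h3
    rw [show p+2+2 = p+4 from rfl, show p+2+1 = p+3 from rfl] at h2
    rw [show p+1+2 = p+3 from rfl, show p+1+1 = p+2 from rfl] at h1
    push_cast at h3 h2 h1 h0 ⊢
    linear_combination h3 - 9*h2 + 27*h1 - 27*h0

lemma rec5_unique (y z : ℕ → ℚ) (h0 : y 0 = z 0)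
    (hy1 : y 1 = 0) (hz1 : z 1 = 0)
    (hy2 : 4*y 2 = 20*y 1 + 24*y 0) (hz2 : 4*z 2 = 20*z 1 + 24*z 0)
    (hy3 : 9*y 3 = 72*y 2 - 54*y 1) (hz3 : 9*z 3 = 72*z 2 - 54*z 1)
    (hy4 : ∀ n:ℕ, ((n:ℚ)+4)^2*y (n+4) = (16*((n:ℚ)+3)^2+4*((n:ℚ)+3))*y (n+3)
      - (78*((n:ℚ)+2)^2-24)*y (n+2) + 36*((n:ℚ)+1)*(4*(n:ℚ)+3)*y (n+1) - 81*(n:ℚ)^2*y n)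
    (hz4 : ∀ n:ℕ, ((n:ℚ)+4)^2*z (n+4) = (16*((n:ℚ)+3)^2+4*((n:ℚ)+3))*z (n+3)
      - (78*((n:ℚ)+2)^2-24)*z (n+2) + 36*((n:ℚ)+1)*(4*(n:ℚ)+3)*z (n+1) - 81*(n:ℚ)^2*z n) :
    ∀ n, y n = z n := by
  intro n
  induction n using Nat.strong_induction_on with
  | _ n ih =>
    match n with
    | 0 => exact h0
    | 1 => rw [hy1, hz1]
    | 2 =>
      have h4 : (4:ℚ) ≠ 0 := by norm_num
      apply mul_left_cancel₀ h4
      rw [hy2, hz2, ih 1 (by omega), ih 0 (by omega)]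
    | 3 =>
      have h9 : (9:ℚ) ≠ 0 := by norm_num
      apply mul_left_cancel₀ h9
      rw [hy3, hz3, ih 2 (by omega), ih 1 (by omega)]
    | (m+4) =>
      have hne : ((m:ℚ)+4)^2 ≠ 0 := by positivity
      apply mul_left_cancel₀ hne
      rw [hy4 m, hz4 m, ih (m+3) (by omega), ih (m+2) (by omega), ih (m+1) (by omega),
        ih m (by omega)]


lemma z0 : PowerSeries.coeff (R := ℚ) 0 Y0 = 1 := by
  rw [Y0, coeff_seriesComp]
  simp [fCoeff, Nat.factorial]

/-- `H(x) = (1/(1-3x)) · ₂F₁(1/3,2/3;1; 27x²(1-x)/(1-3x)³)` in `ℚ⟦x⟧`. -/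
theorem H_eq_hypergeometric :
    Hq = (1 - 3 * PowerSeries.X : PowerSeries ℚ)⁻¹ * seriesComp fCoeff wSeries := by
  have hall := rec5_unique (fun n => PowerSeries.coeff (R := ℚ) n (E * Hq))
    (fun n => PowerSeries.coeff (R := ℚ) n Y0)
    (by simpa using coeffEH0.trans z0.symm)
    y1 z1 y2rel z2 y3rel z3 ymain zmain
  have hEq : E * Hq = Y0 := PowerSeries.ext fun n => hall n
  have hIE : E⁻¹ * E = 1 := by rw [mul_comm]; exact hE
  calc Hq = (E⁻¹ * E) * Hq := by rw [hIE, one_mul]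
    _ = E⁻¹ * (E * Hq) := by rw [mul_assoc]
    _ = E⁻¹ * Y0 := by rw [hEq]

end Main
end
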